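/- Let (M,d) be a compact metric space, Θ₁ ⊂ Θ₂ ⊂ ⋯ ⊂ Θ_∞ ⊂ M with Θ_∞ = closure(∪ₙ Θₙ) compact, positive sequences εₙ → 0, τₙ → 0, δₙ → 0, and continuous functions f, gₙ : Θ_∞ → ℝ. Suppose (i) each gₙ satisfies |gₙ(θ₁) − gₙ(θ₂)| ≤ L_g·d(θ₁,θ₂) + τₙ for all θ₁,θ₂, with gₙ ≥ 0 and sup_{θ∈Θ_∞}|gₙ(θ) − g(θ)| ≤ δₙ; (ii) there is a compact subset Θ̃_∞ ⊂ Θ_∞ such that every θ₀ ∈ Θ̃_∞ has some θ ∈ Θₙ with d(θ,θ₀) ≤ εₙ. Let fₙ* = min{f(θ) : θ ∈ Θₙ, gₙ(θ) ≤ L_g εₙ + δₙ}, f* = min{f(θ) : θ ∈ Θ_∞, g(θ) = 0}, and f̃* = min{f(θ) : θ ∈ Θ̃_∞, g(θ) = 0}, assuming the latter two feasible sets are nonempty. Then liminf fₙ* ≥ f* and limsup fₙ* ≤ f̃*, i.e. [liminf fₙ*, limsup fₙ*] ⊂ [f*, f̃*]. -/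
import Mathlib


open Filter

/-- Convergence of constrained optimization values: under approximate Lipschitz
continuity of the empirical constraints `gₙ`, uniform convergence `gₙ → g`, and
approximability of the compact subset `Θ̃_∞` by `Θₙ`, the optimal values
`fₙ* = inf{f(θ) : θ ∈ Θₙ, gₙ(θ) ≤ L εₙ + δₙ}` satisfy
`f* ≤ liminf fₙ*` and `limsup fₙ* ≤ f̃*`. -/
theorem stmt9 {M : Type*} [MetricSpace M]
    (Θ : ℕ → Set M) (hmono : Monotone Θ)
    (Θinf : Set M) (hΘinf : Θinf = closure (⋃ n, Θ n)) (hcomp : IsCompact Θinf)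
    (ε τ δ : ℕ → ℝ)
    (hεpos : ∀ n, 0 < ε n) (hτpos : ∀ n, 0 < τ n) (hδpos : ∀ n, 0 < δ n)
    (hε : Tendsto ε atTop (nhds 0)) (hτ : Tendsto τ atTop (nhds 0))
    (hδ : Tendsto δ atTop (nhds 0))
    (L : ℝ) (hL : 0 ≤ L)
    (f g : M → ℝ) (gn : ℕ → M → ℝ)
    (hf : ContinuousOn f Θinf) (hg : ContinuousOn g Θinf)
    (hgn : ∀ n, ContinuousOn (gn n) Θinf)
    (hlip : ∀ n, ∀ θ₁ ∈ Θinf, ∀ θ₂ ∈ Θinf,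
      |gn n θ₁ - gn n θ₂| ≤ L * dist θ₁ θ₂ + τ n)
    (hnonneg : ∀ n, ∀ θ ∈ Θinf, 0 ≤ gn n θ)
    (hunif : ∀ n, ∀ θ ∈ Θinf, |gn n θ - g θ| ≤ δ n)
    (Θt : Set M) (hΘt : Θt ⊆ Θinf) (hΘtc : IsCompact Θt)
    (happ : ∀ n, ∀ θ₀ ∈ Θt, ∃ θ ∈ Θ n, dist θ θ₀ ≤ ε n)
    (hfeas : {θ | θ ∈ Θinf ∧ g θ = 0}.Nonempty)
    (hfeast : {θ | θ ∈ Θt ∧ g θ = 0}.Nonempty) :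
    sInf (f '' {θ | θ ∈ Θinf ∧ g θ = 0})
        ≤ liminf (fun n => sInf (f '' {θ | θ ∈ Θ n ∧ gn n θ ≤ L * ε n + δ n})) atTop
    ∧ limsup (fun n => sInf (f '' {θ | θ ∈ Θ n ∧ gn n θ ≤ L * ε n + δ n})) atTop
        ≤ sInf (f '' {θ | θ ∈ Θt ∧ g θ = 0}) := by
  -- basic inclusions
  have hsub : ∀ n, Θ n ⊆ Θinf := fun n => by
    rw [hΘinf]; exact (Set.subset_iUnion Θ n).trans subset_closure
  -- g is nonnegative on Θinf
  have hgnonneg : ∀ θ ∈ Θinf, 0 ≤ g θ := by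
    intro θ hθ
    have h : ∀ m : ℕ, -δ m ≤ g θ := by
      intro m
      have h1 := (abs_le.1 (hunif m θ hθ)).2
      have h2 := hnonneg m θ hθ
      linarith
    have hlim : Tendsto (fun m => -δ m) atTop (nhds (0:ℝ)) := by
      simpa using hδ.neg
    have := le_of_tendsto' hlim h
    simpa using this
  -- g is L-Lipschitz on Θinf
  have hglip : ∀ θ₁ ∈ Θinf, ∀ θ₂ ∈ Θinf, |g θ₁ - g θ₂| ≤ L * dist θ₁ θ₂ := by
    intro θ₁ h₁ θ₂ h₂
    have h : ∀ m : ℕ, |g θ₁ - g θ₂| ≤ L * dist θ₁ θ₂ + (τ m + 2 * δ m) := by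
      intro m
      have h1 := hunif m θ₁ h₁
      have h2 := hunif m θ₂ h₂
      have h3 := hlip m θ₁ h₁ θ₂ h₂
      obtain ⟨a1, a2⟩ := abs_le.1 h1
      obtain ⟨b1, b2⟩ := abs_le.1 h2
      obtain ⟨c1, c2⟩ := abs_le.1 h3
      rw [abs_le]
      constructor <;> linarith
    have hlim : Tendsto (fun m => L * dist θ₁ θ₂ + (τ m + 2 * δ m)) atTop
        (nhds (L * dist θ₁ θ₂)) := by
      have : Tendsto (fun m => τ m + 2 * δ m) atTop (nhds 0) := by
        simpa using hτ.add (hδ.const_mul 2)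
      simpa using (tendsto_const_nhds (x := L * dist θ₁ θ₂)).add this
    exact ge_of_tendsto' hlim h
  -- a global min of f on Θinf, used as a lower bound
  obtain ⟨θF, hθF⟩ := hfeas
  obtain ⟨x₀, hx₀, hmin⟩ := hcomp.exists_isMinOn ⟨θF, hθF.1⟩ hf
  -- Feasible sets
  set F : ℕ → Set M := fun n => {θ | θ ∈ Θ n ∧ gn n θ ≤ L * ε n + δ n} with hF
  set v : ℕ → ℝ := fun n => sInf (f '' F n) with hv
  -- approximating sequence for any point of Θt ∩ {g=0} lands in F n
  have hkey : ∀ θ₀, θ₀ ∈ Θt → g θ₀ = 0 → ∀ n, ∀ θ ∈ Θ n, dist θ θ₀ ≤ ε n → θ ∈ F n := by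
    intro θ₀ hθ₀t hθ₀g n θ hθn hdist
    refine ⟨hθn, ?_⟩
    have hθi : θ ∈ Θinf := hsub n hθn
    have h1 := hunif n θ hθi
    have h2 := hglip θ hθi θ₀ (hΘt hθ₀t)
    rw [hθ₀g, sub_zero] at h2
    have h3 : g θ ≤ L * ε n := by
      have := (abs_le.1 h2).2
      have : g θ ≤ L * dist θ θ₀ := this
      calc g θ ≤ L * dist θ θ₀ := this
        _ ≤ L * ε n := by gcongr
    have := (abs_le.1 h1).2
    linarith
  -- F n is nonempty
  obtain ⟨θ₀', hθ₀'⟩ := hfeast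
  have hθseq : ∀ n, ∃ θ ∈ Θ n, dist θ θ₀' ≤ ε n := fun n => happ n θ₀' hθ₀'.1
  choose θs hθs1 hθs2 using hθseq
  have hFne : ∀ n, (F n).Nonempty := fun n =>
    ⟨θs n, hkey θ₀' hθ₀'.1 hθ₀'.2 n (θs n) (hθs1 n) (hθs2 n)⟩
  have hFsub : ∀ n, F n ⊆ Θinf := fun n θ hθ => hsub n hθ.1
  -- lower bound on v n
  have hvlb : ∀ n, f x₀ ≤ v n := by
    intro n
    apply le_csInf ((hFne n).image f)
    rintro b ⟨θ, hθ, rfl⟩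
    exact hmin (hFsub n hθ)
  have hbdd : ∀ n, BddBelow (f '' F n) := by
    intro n
    exact ⟨f x₀, by rintro b ⟨θ, hθ, rfl⟩; exact hmin (hFsub n hθ)⟩
  -- upper estimate : v n ≤ f θ for θ approximating a feasible point of Θt
  have hub : ∀ θ₀, θ₀ ∈ Θt → g θ₀ = 0 →
      ∃ seq : ℕ → M, (∀ n, v n ≤ f (seq n)) ∧ Tendsto (fun n => f (seq n)) atTop (nhds (f θ₀)) := by
    intro θ₀ hθ₀t hθ₀g
    choose s hs1 hs2 using fun n => happ n θ₀ hθ₀t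
    refine ⟨s, fun n => csInf_le (hbdd n)
      ⟨s n, hkey θ₀ hθ₀t hθ₀g n (s n) (hs1 n) (hs2 n), rfl⟩, ?_⟩
    have hstend : Tendsto s atTop (nhds θ₀) := by
      rw [tendsto_iff_dist_tendsto_zero]
      exact squeeze_zero (fun n => dist_nonneg) hs2 hε
    have hcw : ContinuousWithinAt f Θinf θ₀ := hf θ₀ (hΘt hθ₀t)
    apply hcw.tendsto.comp
    rw [tendsto_nhdsWithin_iff]
    exact ⟨hstend, Eventually.of_forall fun n => hsub n (hs1 n)⟩
  -- v is eventually bounded above (coboundedness facts)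
  obtain ⟨s₀, hs₀le, hs₀t⟩ := hub θ₀' hθ₀'.1 hθ₀'.2
  have hvub : ∀ᶠ n in atTop, v n ≤ f θ₀' + 1 := by
    filter_upwards [hs₀t.eventually_le_const (by linarith : f θ₀' < f θ₀' + 1)] with n hn
    exact (hs₀le n).trans hn
  constructor
  · -- liminf part
    apply le_of_forall_sub_le
    intro η hη
    apply le_liminf_of_le (isCoboundedUnder_ge_of_eventually_le atTop hvub)
    set vstar := sInf (f '' {θ | θ ∈ Θinf ∧ g θ = 0}) with hvstar
    have hbddS : BddBelow (f '' {θ | θ ∈ Θinf ∧ g θ = 0}) :=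
      ⟨f x₀, by rintro b ⟨θ, hθ, rfl⟩; exact hmin hθ.1⟩
    -- claim: ∃ m > 0 with g θ < m → vstar - η ≤ f θ on Θinf
    have hclaim : ∃ m > (0:ℝ), ∀ θ ∈ Θinf, g θ < m → vstar - η ≤ f θ := by
      set K := {θ | θ ∈ Θinf ∧ f θ ≤ vstar - η} with hK
      have hKclosed : IsClosed K := by
        have : K = Θinf ∩ f ⁻¹' Set.Iic (vstar - η) := rfl
        rw [this]
        exact hf.preimage_isClosed_of_isClosed hcomp.isClosed isClosed_Iic
      have hKcomp : IsCompact K := hcomp.of_isClosed_subset hKclosed (fun θ hθ => hθ.1)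
      rcases Set.eq_empty_or_nonempty K with hKe | hKne
      · refine ⟨1, one_pos, fun θ hθ hgθ => ?_⟩
        by_contra h
        push_neg at h
        have hθK : θ ∈ K := ⟨hθ, h.le⟩
        rw [hKe] at hθK
        exact hθK
      · obtain ⟨x, hxK, hxmin⟩ := hKcomp.exists_isMinOn hKne
          (hg.mono fun θ hθ => hθ.1)
        have hgx : 0 < g x := by
          rcases lt_or_eq_of_le (hgnonneg x hxK.1) with h | h
          · exact h
          · exfalso
            have hxS : x ∈ {θ | θ ∈ Θinf ∧ g θ = 0} := ⟨hxK.1, h.symm⟩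
            have : vstar ≤ f x := csInf_le hbddS ⟨x, hxS, rfl⟩
            have := hxK.2
            linarith
        refine ⟨g x, hgx, fun θ hθ hgθ => ?_⟩
        by_contra h
        push_neg at h
        have hθK : θ ∈ K := ⟨hθ, h.le⟩
        exact absurd (hxmin hθK) (not_le.2 hgθ)
    obtain ⟨m, hm, hmprop⟩ := hclaim
    -- eventually L ε n + 2 δ n < m
    have hctend : Tendsto (fun n => L * ε n + 2 * δ n) atTop (nhds 0) := by
      simpa using (hε.const_mul L).add (hδ.const_mul 2)
    filter_upwards [hctend.eventually_lt_const hm] with n hn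
    apply le_csInf ((hFne n).image f)
    rintro b ⟨θ, hθ, rfl⟩
    have hθi : θ ∈ Θinf := hFsub n hθ
    have h1 := hunif n θ hθi
    have hgθ : g θ < m := by
      have := (abs_le.1 h1).1
      have h2 := hθ.2
      calc g θ ≤ gn n θ + δ n := by linarith
        _ ≤ L * ε n + δ n + δ n := by linarith
        _ = L * ε n + 2 * δ n := by ring
        _ < m := hn
    exact hmprop θ hθi hgθ
  · -- limsup part
    apply le_csInf (Set.Nonempty.image f ⟨θ₀', hθ₀'⟩)
    rintro b ⟨θ₀, hθ₀, rfl⟩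
    obtain ⟨s, hsle, hst⟩ := hub θ₀ hθ₀.1 hθ₀.2
    calc limsup v atTop ≤ limsup (fun n => f (s n)) atTop := by
          exact limsup_le_limsup (Eventually.of_forall hsle)
            (isCoboundedUnder_le_of_le atTop hvlb) hst.isBoundedUnder_le
      _ = f θ₀ := hst.limsup_eq
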